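/- Let K, k, z be positive integers with K - k*z even and positive, t = (K-kz)/2 + 1, and fix r ∈ [t, 2t-2]. In Algorithm 1 with p = ⌈kz/r⌉+1 even, for each l ∈ [0, p/2 - 1] the coded symbol T_{kα-(l+1)r} contains the part W_{kα-r, l}^{d(α)} and all other parts appearing in it have indices in the accessible set {kα, kα+1, ..., kα+kz-1} mod K, so user α can decode W_{kα-r, l}^{d(α)}. -/
import Mathlib


theorem stmt_15 (K k z r : ℕ) (hK : 0 < K) (hk : 0 < k) (hz : 0 < z) (hr : 0 < r)
    (heven : Even (K - k * z)) (hpos : 0 < K - k * z) (hlt : k * z < K)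
    (t : ℕ) (ht : t = (K - k * z) / 2 + 1) (hr1 : t ≤ r) (hr2 : r ≤ 2 * t - 2)
    (p : ℕ) (hp : (p : ℤ) = ⌈(k * z : ℚ) / (r : ℚ)⌉ + 1) (hpe : Even p)
    (l : ℕ) (hl : l ≤ p / 2 - 1) (α : ZMod K) :
    let j : ZMod K := (k : ZMod K) * α - (((l + 1) * r : ℕ) : ZMod K)
    (((l * r : ℕ) : ZMod K) + j = (k : ZMod K) * α - (r : ZMod K)) ∧
    (∀ i < p, i ≠ l → ∃ m : ℕ, m < k * z ∧
        ((i * r : ℕ) : ZMod K) + j = (k : ZMod K) * α + (m : ZMod K)) := by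
  intro j
  have hkz : 0 < k * z := Nat.mul_pos hk hz
  have hrQ : (0 : ℚ) < (r : ℚ) := by exact_mod_cast hr
  have hceil : (⌈(k * z : ℚ) / (r : ℚ)⌉ : ℤ) = (p : ℤ) - 1 := by rw [hp]; ring
  -- upper bound: k*z ≤ (p-1)*r
  have h1 : ((k * z : ℕ) : ℚ) / (r : ℚ) ≤ (p : ℚ) - 1 := by
    have h := Int.le_ceil ((k * z : ℚ) / (r : ℚ))
    rw [hceil] at h
    push_cast at h ⊢
    linarith
  have hp2 : 2 ≤ p := by
    have hq : (0 : ℚ) < ((k * z : ℕ) : ℚ) / (r : ℚ) := by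
      apply div_pos _ hrQ
      exact_mod_cast hkz
    have h2 : (1 : ℚ) < (p : ℚ) := by linarith
    have : 1 < p := by exact_mod_cast h2
    omega
  -- lower bound: (p-2)*r < k*z
  have hA : (p - 2) * r < k * z := by
    have h2 : ((p : ℚ) - 1) < (k * z : ℚ) / (r : ℚ) + 1 := by
      have h := Int.ceil_lt_add_one ((k * z : ℚ) / (r : ℚ))
      rw [hceil] at h
      push_cast at h
      linarith
    have h3 : ((p : ℚ) - 2) * (r : ℚ) < ((k * z : ℕ) : ℚ) := by
      rw [← lt_div_iff₀ hrQ]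
      push_cast
      linarith
    have h4 : (((p - 2) * r : ℕ) : ℚ) < ((k * z : ℕ) : ℚ) := by
      calc (((p - 2) * r : ℕ) : ℚ) = ((p : ℚ) - 2) * (r : ℚ) := by
            push_cast [Nat.cast_sub hp2]; ring
        _ < _ := h3
    exact_mod_cast h4
  obtain ⟨e, he⟩ := heven
  obtain ⟨q, hq⟩ := hpe
  have hKe : K = k * z + 2 * e := by omega
  have hte : t = e + 1 := by omega
  refine ⟨?_, ?_⟩
  · show ((l * r : ℕ) : ZMod K) + ((k : ZMod K) * α - (((l + 1) * r : ℕ) : ZMod K))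
        = (k : ZMod K) * α - (r : ZMod K)
    push_cast
    ring
  · intro i hi hne
    rcases lt_or_gt_of_ne hne with hil | hil
    · -- i < l : m = K - (l+1-i)*r
      have hs2 : 2 ≤ l + 1 - i := by omega
      have h1' : 2 * r ≤ (l + 1 - i) * r := Nat.mul_le_mul hs2 le_rfl
      have h2' : (l + 1 - i) * r + (l + 1 - i) * r ≤ p * r := by
        calc (l + 1 - i) * r + (l + 1 - i) * r
            = ((l + 1 - i) + (l + 1 - i)) * r := by rw [add_mul]
          _ ≤ p * r := Nat.mul_le_mul (by omega) le_rfl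
      have h3' : p * r < k * z + 2 * r := by
        have hpr : p * r = (p - 2) * r + 2 * r := by
          rw [← add_mul]; congr 1; omega
        omega
      have hre : r ≤ 2 * e := by omega
      have hrt : e + 1 ≤ r := by omega
      have hsK : (l + 1 - i) * r < K := by
        have : (l + 1 - i) * r + (l + 1 - i) * r < K + K := by
          calc (l + 1 - i) * r + (l + 1 - i) * r ≤ p * r := h2'
            _ < k * z + 2 * r := h3'
            _ ≤ k * z + 4 * e := by omega
            _ < K + K := by omega
        omega
      have hlow : K < k * z + (l + 1 - i) * r := by omega
      refine ⟨K - (l + 1 - i) * r, ?_, ?_⟩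
      · omega
      · have h5 : i * r ≤ (l + 1) * r := Nat.mul_le_mul (by omega) le_rfl
        have hXle : (l + 1) * r - i * r ≤ K := by
          rw [← Nat.sub_mul]; exact hsK.le
        have hcast : ((K - (l + 1 - i) * r : ℕ) : ZMod K)
            = ((i * r : ℕ) : ZMod K) - (((l + 1) * r : ℕ) : ZMod K) := by
          rw [Nat.sub_mul, Nat.cast_sub hXle, Nat.cast_sub h5, ZMod.natCast_self]
          ring
        rw [hcast]
        show ((i * r : ℕ) : ZMod K) + ((k : ZMod K) * α - (((l + 1) * r : ℕ) : ZMod K)) = _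
        ring
    · -- i > l : m = (i-l-1)*r
      refine ⟨(i - l - 1) * r, ?_, ?_⟩
      · calc (i - l - 1) * r ≤ (p - 2) * r := Nat.mul_le_mul (by omega) le_rfl
          _ < k * z := hA
      · have hir : (i - l - 1) * r + (l + 1) * r = i * r := by
          rw [← add_mul]; congr 1; omega
        show ((i * r : ℕ) : ZMod K) + ((k : ZMod K) * α - (((l + 1) * r : ℕ) : ZMod K))
            = (k : ZMod K) * α + (((i - l - 1) * r : ℕ) : ZMod K)
        rw [← hir]
        push_cast
        ring
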